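/- Let α be a Sturm number, i.e., an irrational quadratic number with 0 < α < 1 (α² = bα + c for some rationals b, c) whose algebraic conjugate ᾱ = b − α satisfies ᾱ ∉ [0,1]. Then there exists a morphism ψ, not equal to the identity, in the monoid ⟨ψ₃,ψ₈⟩ generated by ψ₃ and ψ₈, such that ψ fixes the Sturmian word s_{α,0}. -/

import Mathlib

/-- A morphism of the free monoid `{0,1}*`, determined by the images of the two
letters (`false` encodes the letter 0, `true` encodes the letter 1). -/
abbrev Morph := Bool → List Bool

/-- The identity morphism. -/
def idm : Morph := fun a => [a]

/-- Composition of morphisms: `(M σ τ)(a) = σ(τ(a))`. -/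
def M (σ τ : Morph) : Morph := fun a => (τ a).flatMap σ

/-- `compAll g [i₁, …, iₙ] = g i₁ ∘ g i₂ ∘ ⋯ ∘ g iₙ` (the identity for `n = 0`). -/
def compAll (g : Bool → Morph) (l : List Bool) : Morph :=
  l.foldr (fun i acc => M (g i) acc) idm

/-- Iterated composition of a morphism with itself. -/
def mpow (σ : Morph) : ℕ → Morph
  | 0 => idm
  | k + 1 => M σ (mpow σ k)

/-- The length-`n` prefix of an infinite word. -/
def wpref (w : ℕ → Bool) (n : ℕ) : List Bool := (List.range n).map w

/-- `σ` fixes the infinite word `w`: for every `n`, the finite word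
`σ(w(0))σ(w(1))⋯σ(w(n-1))` is a prefix of `w`. -/
def Fixes (σ : Morph) (w : ℕ → Bool) : Prop :=
  ∀ n : ℕ, (wpref w n).flatMap σ = wpref w ((wpref w n).flatMap σ).length

/-- The integer value `⌊(n+1)α + ρ⌋ - ⌊nα + ρ⌋` of the Sturmian word `s_{α,ρ}`. -/
noncomputable def sfl (α ρ : ℝ) (n : ℕ) : ℤ :=
  ⌊((n : ℝ) + 1) * α + ρ⌋ - ⌊(n : ℝ) * α + ρ⌋

/-- The integer value `⌈(n+1)α + ρ⌉ - ⌈nα + ρ⌉` of the Sturmian word `s'_{α,ρ}`. -/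
noncomputable def scl (α ρ : ℝ) (n : ℕ) : ℤ :=
  ⌈((n : ℝ) + 1) * α + ρ⌉ - ⌈(n : ℝ) * α + ρ⌉

/-- The Sturmian word `s_{α,ρ}` as an infinite binary word. -/
noncomputable def sw (α ρ : ℝ) : ℕ → Bool := fun n => decide (sfl α ρ n = 1)

/-- The Sturmian word `s'_{α,ρ}` as an infinite binary word. -/
noncomputable def sw' (α ρ : ℝ) : ℕ → Bool := fun n => decide (scl α ρ n = 1)

/-- The characteristic word `c_α = s_{α,α}`. -/
noncomputable def cw (α : ℝ) : ℕ → Bool := sw α α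

/-- `ψ₁ : 0 → 01, 1 → 0` (the Fibonacci morphism, `φ₁`). -/
def psi1 : Morph := fun a => match a with | false => [false, true] | true => [false]

/-- `ψ₃ : 0 → 0, 1 → 01` (the morphism `G`, i.e. `φ₀`). -/
def psi3 : Morph := fun a => match a with | false => [false] | true => [false, true]

/-- `ψ₄ : 0 → 0, 1 → 10`. -/
def psi4 : Morph := fun a => match a with | false => [false] | true => [true, false]

/-- `ψ₇ : 0 → 10, 1 → 1`. -/
def psi7 : Morph := fun a => match a with | false => [true, false] | true => [true]

/-- `ψ₈ : 0 → 01, 1 → 1`. -/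
def psi8 : Morph := fun a => match a with | false => [false, true] | true => [true]

/-- Time reversal of a morphism. -/
def trev (σ : Morph) : Morph := fun a => (σ a).reverse

/-- The exchange morphism `E : 0 → 1, 1 → 0`. -/
def Em : Morph := fun a => [!a]

/-- Generators `φ₀, φ₁` indexed by a bit: `false ↦ φ₀ (= ψ₃)`, `true ↦ φ₁ (= ψ₁)`. -/
def phiGen : Bool → Morph := fun b => match b with | false => psi3 | true => psi1

/-- Generators of `⟨ψ₁, ψ₃⟩`: `false` encodes the index 1 (`ψ₁`),
`true` encodes the index 3 (`ψ₃`). -/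
def g13 : Bool → Morph := fun b => match b with | false => psi1 | true => psi3

/-- Generators of `⟨ψ₃, ψ₈⟩`: `false ↦ ψ₃`, `true ↦ ψ₈`. -/
def g38 : Bool → Morph := fun b => match b with | false => psi3 | true => psi8

/-- Generators of `⟨ψ₄, ψ₇⟩`: `false ↦ ψ₄`, `true ↦ ψ₇`. -/
def g47 : Bool → Morph := fun b => match b with | false => psi4 | true => psi7

/-- The Kepler matrices `K₀ = [[1,0],[1,1]]` and `K₁ = [[0,1],[1,1]]`. -/
def K : Bool → Matrix (Fin 2) (Fin 2) ℕ
  | false => !![1, 0; 1, 1]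
  | true => !![0, 1; 1, 1]


lemma wpref_succ (w : ℕ → Bool) (n : ℕ) : wpref w (n+1) = wpref w n ++ [w n] := by
  simp [wpref, List.range_succ]

lemma wpref_length (w : ℕ → Bool) (n : ℕ) : (wpref w n).length = n := by simp [wpref]

lemma sfl_cases (β : ℝ) (h0 : 0 < β) (h1 : β < 1) (n : ℕ) :
    ⌊((n:ℝ)+1)*β⌋ = ⌊(n:ℝ)*β⌋ ∨ ⌊((n:ℝ)+1)*β⌋ = ⌊(n:ℝ)*β⌋ + 1 := by
  have hle : ⌊(n:ℝ)*β⌋ ≤ ⌊((n:ℝ)+1)*β⌋ := by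
    apply Int.floor_le_floor; nlinarith
  have hlt : ⌊((n:ℝ)+1)*β⌋ ≤ ⌊(n:ℝ)*β⌋ + 1 := by
    have : ((n:ℝ)+1)*β < (n:ℝ)*β + 1 := by nlinarith
    calc ⌊((n:ℝ)+1)*β⌋ ≤ ⌊(n:ℝ)*β + 1⌋ := Int.floor_le_floor this.le
      _ = ⌊(n:ℝ)*β⌋ + 1 := by rw [Int.floor_add_one]
  omega

lemma floor_div_eq (m : ℕ) (k : ℤ) (d β : ℝ) (hd : 0 < d)
    (hl : (k:ℝ)*d ≤ (m:ℝ)*β) (hu : (m:ℝ)*β < ((k:ℝ)+1)*d) :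
    ⌊(m:ℝ)*(β/d)⌋ = k := by
  rw [Int.floor_eq_iff]
  constructor
  · rw [mul_div_assoc', le_div_iff₀ hd]; exact hl
  · rw [mul_div_assoc', div_lt_iff₀ hd]; push_cast; exact hu

lemma step3 (β : ℝ) (h0 : 0 < β) (h1 : β < 1) (n : ℕ) :
    (wpref (sw β 0) n).flatMap psi3
      = wpref (sw (β/(1+β)) 0) (n + (⌊(n:ℝ)*β⌋).toNat) := by
  induction n with
  | zero => simp [wpref]
  | succ n ih =>
    have hFnn : 0 ≤ ⌊(n:ℝ)*β⌋ := Int.floor_nonneg.2 (by positivity)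
    set F := ⌊(n:ℝ)*β⌋ with hF
    have hFle : (F:ℝ) ≤ n*β := Int.floor_le _
    have hFlt : (n:ℝ)*β < F+1 := Int.lt_floor_add_one _
    have hd : (0:ℝ) < 1 + β := by linarith
    have hFt : ((F.toNat:ℕ):ℝ) = (F:ℝ) := by exact_mod_cast Int.toNat_of_nonneg hFnn
    have hK : ((n + F.toNat : ℕ):ℝ) = (n:ℝ) + F := by push_cast; rw [hFt]
    have hK1 : ((n + F.toNat + 1 : ℕ):ℝ) = (n:ℝ) + F + 1 := by push_cast; rw [hFt]
    have hK2 : ((n + F.toNat + 2 : ℕ):ℝ) = (n:ℝ) + F + 2 := by push_cast; rw [hFt]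
    have hfl0 : ⌊((n + F.toNat : ℕ):ℝ)*(β/(1+β))⌋ = F := by
      apply floor_div_eq _ _ _ _ hd <;> rw [hK] <;> nlinarith
    rcases sfl_cases β h0 h1 n with hE | hE
    · -- letter false
      have hwn : sw β 0 n = false := by simp [sw, sfl, hF.symm, hE]
      have hfl1 : ⌊((n + F.toNat + 1 : ℕ):ℝ)*(β/(1+β))⌋ = F := by
        apply floor_div_eq _ _ _ _ hd <;> rw [hK1] <;> nlinarith [hE ▸ Int.lt_floor_add_one (((n:ℝ)+1)*β), hE ▸ Int.floor_le (((n:ℝ)+1)*β)]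
      have hvK : sw (β/(1+β)) 0 (n + F.toNat) = false := by
        simp [sw, sfl]
        push_cast
        rw [show ((n:ℝ) + F.toNat + 1) = ((n + F.toNat + 1 : ℕ):ℝ) by push_cast; ring,
            show ((n:ℝ) + (F.toNat:ℝ)) = ((n + F.toNat : ℕ):ℝ) by push_cast; ring,
            hfl0, hfl1]
        omega
      have hidx : n + 1 + (⌊((n:ℝ)+1)*β⌋).toNat = (n + F.toNat) + 1 := by omega
      rw [wpref_succ, List.flatMap_append, ih, hwn]
      rw [show ((n+1 : ℕ):ℝ) = (n:ℝ)+1 by push_cast; ring, hidx, wpref_succ, hvK]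
      simp [psi3]
    · -- letter true
      have hwn : sw β 0 n = true := by simp [sw, sfl, hF.symm, hE]
      have h1le : (F:ℝ) + 1 ≤ ((n:ℝ)+1)*β := by
        have := Int.floor_le (((n:ℝ)+1)*β); rw [hE] at this; push_cast at this; linarith
      have h1lt : ((n:ℝ)+1)*β < F + 2 := by
        have := Int.lt_floor_add_one (((n:ℝ)+1)*β); rw [hE] at this; push_cast at this; linarith
      have hfl1 : ⌊((n + F.toNat + 1 : ℕ):ℝ)*(β/(1+β))⌋ = F := by
        apply floor_div_eq _ _ _ _ hd <;> rw [hK1] <;> nlinarith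
      have hfl2 : ⌊((n + F.toNat + 2 : ℕ):ℝ)*(β/(1+β))⌋ = F + 1 := by
        apply floor_div_eq _ _ _ _ hd <;> rw [hK2] <;> push_cast <;> nlinarith
      have hvK : sw (β/(1+β)) 0 (n + F.toNat) = false := by
        simp [sw, sfl]
        push_cast
        rw [show ((n:ℝ) + F.toNat + 1) = ((n + F.toNat + 1 : ℕ):ℝ) by push_cast; ring,
            show ((n:ℝ) + (F.toNat:ℝ)) = ((n + F.toNat : ℕ):ℝ) by push_cast; ring,
            hfl0, hfl1]
        omega
      have hvK1 : sw (β/(1+β)) 0 (n + F.toNat + 1) = true := by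
        simp [sw, sfl]
        push_cast
        rw [show ((n:ℝ) + F.toNat + 1 + 1) = ((n + F.toNat + 2 : ℕ):ℝ) by push_cast; ring,
            show ((n:ℝ) + (F.toNat:ℝ) + 1) = ((n + F.toNat + 1 : ℕ):ℝ) by push_cast; ring,
            hfl1, hfl2]
        omega
      have hidx : n + 1 + (⌊((n:ℝ)+1)*β⌋).toNat = (n + F.toNat) + 2 := by omega
      rw [wpref_succ, List.flatMap_append, ih, hwn]
      rw [show ((n+1 : ℕ):ℝ) = (n:ℝ)+1 by push_cast; ring, hidx, wpref_succ, wpref_succ, hvK, hvK1]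
      simp [psi3]

lemma step8 (β : ℝ) (h0 : 0 < β) (h1 : β < 1) (n : ℕ) :
    (wpref (sw β 0) n).flatMap psi8
      = wpref (sw (1/(2-β)) 0) (2*n - (⌊(n:ℝ)*β⌋).toNat) := by
  induction n with
  | zero => simp [wpref]
  | succ n ih =>
    have hFnn : 0 ≤ ⌊(n:ℝ)*β⌋ := Int.floor_nonneg.2 (by positivity)
    have hFlen : ⌊(n:ℝ)*β⌋ ≤ (n:ℤ) := by
      have h : ((n:ℝ)*β) ≤ ((n:ℤ):ℝ) := by push_cast; nlinarith
      calc ⌊(n:ℝ)*β⌋ ≤ ⌊((n:ℤ):ℝ)⌋ := Int.floor_le_floor h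
        _ = (n:ℤ) := Int.floor_intCast _
    set F := ⌊(n:ℝ)*β⌋ with hF
    have hFle : (F:ℝ) ≤ n*β := Int.floor_le _
    have hFlt : (n:ℝ)*β < F+1 := Int.lt_floor_add_one _
    have hd : (0:ℝ) < 2 - β := by linarith
    have hFt : ((F.toNat:ℕ):ℝ) = (F:ℝ) := by exact_mod_cast Int.toNat_of_nonneg hFnn
    have hFtn : F.toNat ≤ n := by omega
    have hK : ((2*n - F.toNat : ℕ):ℝ) = 2*(n:ℝ) - F := by
      push_cast [Nat.cast_sub (by omega : F.toNat ≤ 2*n)]; rw [hFt]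
    have hK1 : ((2*n - F.toNat + 1 : ℕ):ℝ) = 2*(n:ℝ) - F + 1 := by
      push_cast [Nat.cast_sub (by omega : F.toNat ≤ 2*n)]; rw [hFt]
    have hK2 : ((2*n - F.toNat + 2 : ℕ):ℝ) = 2*(n:ℝ) - F + 2 := by
      push_cast [Nat.cast_sub (by omega : F.toNat ≤ 2*n)]; rw [hFt]
    have hfl0 : ⌊((2*n - F.toNat : ℕ):ℝ)*(1/(2-β))⌋ = (n:ℤ) := by
      rw [show (1:ℝ)/(2-β) = 1/(2-β) from rfl]
      apply floor_div_eq _ _ _ _ hd <;> rw [hK] <;> push_cast <;> nlinarith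
    rcases sfl_cases β h0 h1 n with hE | hE
    · -- letter false : append [false, true]
      have hwn : sw β 0 n = false := by simp [sw, sfl, hF.symm, hE]
      have hEle : ((n:ℝ)+1)*β < F + 1 := by
        have := Int.lt_floor_add_one (((n:ℝ)+1)*β); rw [hE] at this; push_cast at this; linarith
      have hfl1 : ⌊((2*n - F.toNat + 1 : ℕ):ℝ)*(1/(2-β))⌋ = (n:ℤ) := by
        apply floor_div_eq _ _ _ _ hd <;> rw [hK1] <;> push_cast <;> nlinarith
      have hfl2 : ⌊((2*n - F.toNat + 2 : ℕ):ℝ)*(1/(2-β))⌋ = (n:ℤ) + 1 := by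
        apply floor_div_eq _ _ _ _ hd <;> rw [hK2] <;> push_cast <;> nlinarith
      have hvK : sw (1/(2-β)) 0 (2*n - F.toNat) = false := by
        simp only [sw, sfl, add_zero, decide_eq_false_iff_not]
        rw [show ((((2*n - F.toNat : ℕ)):ℝ) + 1) = ((2*n - F.toNat + 1 : ℕ):ℝ) by push_cast; ring,
            hfl0, hfl1]
        omega
      have hvK1 : sw (1/(2-β)) 0 (2*n - F.toNat + 1) = true := by
        simp only [sw, sfl, add_zero, decide_eq_true_eq]
        rw [show ((((2*n - F.toNat + 1 : ℕ)):ℝ) + 1) = ((2*n - F.toNat + 2 : ℕ):ℝ) by push_cast; ring,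
            hfl1, hfl2]
        omega
      have hidx : 2*(n + 1) - (⌊((n:ℝ)+1)*β⌋).toNat = (2*n - F.toNat) + 2 := by
        rw [hE]; omega
      rw [wpref_succ, List.flatMap_append, ih, hwn]
      rw [show ((n+1 : ℕ):ℝ) = (n:ℝ)+1 by push_cast; ring, hidx, wpref_succ, wpref_succ, hvK, hvK1]
      simp [psi8]
    · -- letter true : append [true]
      have hwn : sw β 0 n = true := by simp [sw, sfl, hF.symm, hE]
      have h1le : (F:ℝ) + 1 ≤ ((n:ℝ)+1)*β := by
        have := Int.floor_le (((n:ℝ)+1)*β); rw [hE] at this; push_cast at this; linarith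
      have hfl1 : ⌊((2*n - F.toNat + 1 : ℕ):ℝ)*(1/(2-β))⌋ = (n:ℤ) + 1 := by
        apply floor_div_eq _ _ _ _ hd <;> rw [hK1] <;> push_cast <;> nlinarith
      have hvK : sw (1/(2-β)) 0 (2*n - F.toNat) = true := by
        simp only [sw, sfl, add_zero, decide_eq_true_eq]
        rw [show ((((2*n - F.toNat : ℕ)):ℝ) + 1) = ((2*n - F.toNat + 1 : ℕ):ℝ) by push_cast; ring,
            hfl0, hfl1]
        omega
      have hidx : 2*(n + 1) - (⌊((n:ℝ)+1)*β⌋).toNat = (2*n - F.toNat) + 1 := by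
        rw [hE]; omega
      rw [wpref_succ, List.flatMap_append, ih, hwn]
      rw [show ((n+1 : ℕ):ℝ) = (n:ℝ)+1 by push_cast; ring, hidx, wpref_succ, hvK]
      simp [psi8]


noncomputable def mob : Bool → ℝ → ℝ
  | false => fun β => β/(1+β)
  | true => fun β => 1/(2-β)

noncomputable def mobAll (l : List Bool) (β : ℝ) : ℝ := l.foldr mob β

lemma mob_mem (i : Bool) (β : ℝ) (h0 : 0 < β) (h1 : β < 1) :
    0 < mob i β ∧ mob i β < 1 := by
  cases i
  · refine ⟨by show 0 < β/(1+β); positivity, ?_⟩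
    show β/(1+β) < 1
    rw [div_lt_one (by linarith)]; linarith
  · have h2 : (0:ℝ) < 2-β := by linarith
    refine ⟨by show 0 < 1/(2-β); positivity, ?_⟩
    show 1/(2-β) < 1
    rw [div_lt_one (by linarith)]; linarith

lemma mobAll_mem (l : List Bool) (β : ℝ) (h0 : 0 < β) (h1 : β < 1) :
    0 < mobAll l β ∧ mobAll l β < 1 := by
  induction l with
  | nil => exact ⟨h0, h1⟩
  | cons i l ih => exact mob_mem i (mobAll l β) ih.1 ih.2

lemma flat_l (l : List Bool) (β : ℝ) (h0 : 0 < β) (h1 : β < 1) (n : ℕ) :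
    (wpref (sw β 0) n).flatMap (compAll g38 l)
      = wpref (sw (mobAll l β) 0) (((wpref (sw β 0) n).flatMap (compAll g38 l)).length) := by
  induction l generalizing n with
  | nil =>
    simp only [compAll, List.foldr_nil, mobAll]
    rw [show ∀ (w : List Bool), w.flatMap idm = w from fun w => List.flatMap_singleton' w]
    rw [wpref_length]
  | cons i l ih =>
    have hassoc : (wpref (sw β 0) n).flatMap (compAll g38 (i :: l))
        = ((wpref (sw β 0) n).flatMap (compAll g38 l)).flatMap (g38 i) := by
      simp only [compAll, List.foldr_cons]
      rw [List.flatMap_assoc]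
      rfl
    obtain ⟨hg0, hg1⟩ := mobAll_mem l β h0 h1
    rw [hassoc, ih]
    set L := ((wpref (sw β 0) n).flatMap (compAll g38 l)).length
    cases i
    · have h := step3 (mobAll l β) hg0 hg1 L
      rw [show g38 false = psi3 from rfl,
          show mobAll (false :: l) β = (mobAll l β)/(1+mobAll l β) from rfl, h, wpref_length]
    · have h := step8 (mobAll l β) hg0 hg1 L
      rw [show g38 true = psi8 from rfl,
          show mobAll (true :: l) β = 1/(2-mobAll l β) from rfl, h, wpref_length]

lemma compAll_ne_nil (l : List Bool) (a : Bool) : compAll g38 l a ≠ [] := by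
  induction l with
  | nil => simp [compAll, idm]
  | cons i l ih =>
    show (compAll g38 l a).flatMap (g38 i) ≠ []
    obtain ⟨b, t, h⟩ := List.exists_cons_of_ne_nil ih
    rw [h]
    cases i <;> cases b <;> simp [g38, psi3, psi8, List.flatMap_cons]

lemma compAll_cons_ne_idm (i : Bool) (l : List Bool) : compAll g38 (i :: l) ≠ idm := by
  intro h
  cases i
  · -- ψ₃ outer: image of `true` contains `false`, but idm true = [true]
    have h' := congrFun h true
    have : false ∈ (compAll g38 l true).flatMap (g38 false) := by
      obtain ⟨b, t, hbt⟩ := List.exists_cons_of_ne_nil (compAll_ne_nil l true)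
      rw [hbt]
      cases b <;> simp [g38, psi3, List.flatMap_cons]
    rw [show (compAll g38 (false :: l)) true = (compAll g38 l true).flatMap (g38 false) from rfl] at h'
    rw [h'] at this
    simp [idm] at this
  · have h' := congrFun h false
    have : true ∈ (compAll g38 l false).flatMap (g38 true) := by
      obtain ⟨b, t, hbt⟩ := List.exists_cons_of_ne_nil (compAll_ne_nil l false)
      rw [hbt]
      cases b <;> simp [g38, psi8, List.flatMap_cons]
    rw [show (compAll g38 (true :: l)) false = (compAll g38 l false).flatMap (g38 true) from rfl] at h'
    rw [h'] at this
    simp [idm] at this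


def tq0 : ℤ×ℤ×ℤ → ℤ×ℤ×ℤ := fun t => (t.1+t.2.1+t.2.2, t.2.1+2*t.2.2, t.2.2)
def tq1 : ℤ×ℤ×ℤ → ℤ×ℤ×ℤ := fun t => (t.2.2, -(t.2.1+4*t.2.2), t.1+2*t.2.1+4*t.2.2)

noncomputable def stepF : ℝ × (ℤ×ℤ×ℤ) → ℝ × (ℤ×ℤ×ℤ) :=
  fun s => if s.1 < 1/2 then (s.1/(1-s.1), tq0 s.2) else (2-1/s.1, tq1 s.2)

noncomputable def conjOf : ℝ × (ℤ×ℤ×ℤ) → ℝ := fun s => -(s.2.2.1:ℝ)/(s.2.1:ℝ) - s.1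

def SInv (D : ℤ) (s : ℝ × (ℤ×ℤ×ℤ)) : Prop :=
  Irrational s.1 ∧ 0 < s.1 ∧ s.1 < 1 ∧ s.2.1 ≠ 0 ∧
    (s.2.1:ℝ)*s.1^2 + (s.2.2.1:ℝ)*s.1 + (s.2.2.2:ℝ) = 0 ∧
    (conjOf s < 0 ∨ 1 < conjOf s) ∧ s.2.2.1^2 - 4*s.2.1*s.2.2.2 = D

lemma irrational_inv (x : ℝ) (h : Irrational x) : Irrational x⁻¹ := by
  intro ⟨q, hq⟩
  by_cases hx : x = 0
  · exact h ⟨0, by rw [hx]; exact Rat.cast_zero⟩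
  · exact h ⟨q⁻¹, by rw [Rat.cast_inv, hq, inv_inv]⟩

lemma inv_step (D : ℤ) (s : ℝ × (ℤ×ℤ×ℤ)) (h : SInv D s) :
    SInv D (stepF s) ∧
      (if s.1 < 1/2 then conjOf (stepF s) < 0 else 1 < conjOf (stepF s)) := by
  obtain ⟨x, A, B, C⟩ := s
  obtain ⟨hirr, hx0, hx1, hA, hq, hc, hD⟩ := h
  simp only [conjOf] at hc
  dsimp only at hirr hx0 hx1 hA hq hc hD
  obtain ⟨y, hy⟩ : ∃ y:ℝ, y = -(B:ℝ)/(A:ℝ) - x := ⟨_, rfl⟩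
  rw [← hy] at hc
  have hAne : (A:ℝ) ≠ 0 := Int.cast_ne_zero.2 hA
  have hB : (B:ℝ) = -(A:ℝ)*(x+y) := by rw [hy]; field_simp; ring
  have hC : (C:ℝ) = (A:ℝ)*(x*y) := by
    have h' : (C:ℝ) = -((A:ℝ)*x^2 + (B:ℝ)*x) := by linarith [hq]
    rw [h', hB]; ring
  have hy0 : y ≠ 0 := by rcases hc with h'|h' <;> intro h'' <;> rw [h''] at h' <;> norm_num at h'
  have hy1 : y ≠ 1 := by rcases hc with h'|h' <;> intro h'' <;> rw [h''] at h' <;> norm_num at h'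
  have hxne : x ≠ 0 := ne_of_gt hx0
  by_cases hhalf : x < 1/2
  · -- branch ψ₃⁻¹ : x' = x/(1-x)
    have h1x : (0:ℝ) < 1 - x := by linarith
    have hne : (1:ℝ) - x ≠ 0 := ne_of_gt h1x
    have hy1' : (1:ℝ) - y ≠ 0 := fun h' => hy1 (by linarith)
    have hs : stepF (x, A, B, C) = (x/(1-x), A+B+C, B+2*C, C) := by
      show (if ((x, A, B, C).1 : ℝ) < 1/2 then _ else _) = _
      rw [if_pos (show ((x, A, B, C).1 : ℝ) < 1/2 from hhalf)]
      rfl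
    rw [hs]
    have hA' : (A:ℝ)+B+C ≠ 0 := by
      rw [hB, hC]
      intro h'
      have h2 : (A:ℝ)*((1-x)*(1-y)) = 0 := by linarith [h']
      rcases mul_eq_zero.1 h2 with h''|h''
      · exact hAne h''
      · rcases mul_eq_zero.1 h'' with h3|h3
        · exact hne h3
        · exact hy1' h3
    have hA'z : (A+B+C : ℤ) ≠ 0 := by
      intro h'; apply hA'
      have h2 := congrArg (fun z : ℤ => (z:ℝ)) h'
      push_cast at h2; linarith
    have hconjval : conjOf (x/(1-x), A+B+C, B+2*C, C) = y/(1-y) := by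
      show -((B+2*C : ℤ):ℝ)/((A+B+C : ℤ):ℝ) - x/(1-x) = y/(1-y)
      push_cast
      field_simp [hA', hne, hy1']
      rw [hB, hC]
      ring
    have hcneg : conjOf (x/(1-x), A+B+C, B+2*C, C) < 0 := by
      rw [hconjval]
      rcases hc with h'|h'
      · exact div_neg_of_neg_of_pos h' (by linarith)
      · exact div_neg_of_pos_of_neg (by linarith) (by linarith)
    refine ⟨⟨?_, ?_, ?_, hA'z, ?_, Or.inl hcneg, ?_⟩, ?_⟩
    · -- irrational
      show Irrational (x/(1-x))
      have h2 : Irrational (1-x) := by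
        have := hirr.ratCast_sub (q := 1); push_cast at this; exact this
      have h3 : Irrational ((1-x)⁻¹) := irrational_inv _ h2
      have h4 : Irrational ((-1:ℚ) + (1-x)⁻¹) := h3.ratCast_add (q := -1)
      have h5 : x/(1-x) = (-1:ℚ) + (1-x)⁻¹ := by push_cast; field_simp; ring
      rw [h5]; exact h4
    · show (0:ℝ) < x/(1-x); positivity
    · show x/(1-x) < 1
      rw [div_lt_one h1x]; linarith
    · show ((A+B+C : ℤ):ℝ)*(x/(1-x))^2 + ((B+2*C : ℤ):ℝ)*(x/(1-x)) + (C:ℝ) = 0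
      push_cast
      field_simp [hne]
      first
      | linear_combination hq
      | linear_combination (-x)*hq
      | linear_combination x*hq
      | linear_combination (x-1)*hq
      | linear_combination (1-x)*hq
      | linear_combination (-1)*hq
    · show (B+2*C)^2 - 4*(A+B+C)*C = D
      linear_combination hD
    · rw [if_pos hhalf]; exact hcneg
  · -- branch ψ₈⁻¹ : x' = 2 - 1/x
    have hxhalf : 1/2 < x := by
      rcases lt_or_eq_of_le (not_lt.1 hhalf) with h'|h'
      · exact h'
      · exact absurd h'.symm (hirr.ne_rat (1/2) ∘ fun h'' => by push_cast at *; linarith)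
    have hCne : (C:ℝ) ≠ 0 := by
      rw [hC]
      exact mul_ne_zero hAne (mul_ne_zero hxne hy0)
    have hCz : (C : ℤ) ≠ 0 := fun h' => hCne (by rw [h']; simp)
    have hs : stepF (x, A, B, C) = (2-1/x, C, -(B+4*C), A+2*B+4*C) := by
      show (if ((x, A, B, C).1 : ℝ) < 1/2 then _ else _) = _
      rw [if_neg (show ¬ ((x, A, B, C).1 : ℝ) < 1/2 from hhalf)]
      rfl
    rw [hs]
    have hconjval : conjOf (2-1/x, C, -(B+4*C), A+2*B+4*C) = 2 - 1/y := by
      show -((-(B+4*C) : ℤ):ℝ)/((C : ℤ):ℝ) - (2-1/x) = 2 - 1/y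
      push_cast
      field_simp [hCne, hxne, hy0]
      rw [hB, hC]
      ring
    have hcgt : 1 < conjOf (2-1/x, C, -(B+4*C), A+2*B+4*C) := by
      rw [hconjval]
      rcases hc with h'|h'
      · have : 1/y < 0 := div_neg_of_pos_of_neg one_pos h'
        linarith
      · have : 1/y < 1 := by rw [div_lt_one (by linarith)]; linarith
        linarith
    refine ⟨⟨?_, ?_, ?_, hCz, ?_, Or.inr hcgt, ?_⟩, ?_⟩
    · show Irrational (2-1/x)
      have h3 : Irrational (x⁻¹) := irrational_inv _ hirr
      have h4 : Irrational ((2:ℚ) - x⁻¹) := h3.ratCast_sub (q := 2)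
      have h5 : 2-1/x = ((2:ℚ):ℝ) - x⁻¹ := by push_cast; rw [one_div]
      rw [h5]; exact h4
    · show (0:ℝ) < 2-1/x
      have : 1/x < 2 := by rw [div_lt_iff₀ hx0]; linarith
      linarith
    · show 2-1/x < 1
      have : 1 < 1/x := by rw [lt_div_iff₀ hx0]; linarith
      linarith
    · show ((C : ℤ):ℝ)*(2-1/x)^2 + ((-(B+4*C) : ℤ):ℝ)*(2-1/x) + ((A+2*B+4*C : ℤ):ℝ) = 0
      push_cast
      field_simp [hxne]
      first
      | linear_combination hq
      | linear_combination (-x)*hq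
      | linear_combination x*hq
      | linear_combination (x-1)*hq
      | linear_combination (1-x)*hq
      | linear_combination (-1)*hq
      | linear_combination (x^2)*hq
      | linear_combination (-x^2)*hq
    · show (-(B+4*C))^2 - 4*C*(A+2*B+4*C) = D
      linear_combination hD
    · rw [if_neg hhalf]; exact hcgt

lemma sq_le_abs_le (a D : ℤ) (hD : 1 ≤ D) (h : a^2 ≤ D) : |a| ≤ D := by
  rw [abs_le]; constructor <;> nlinarith

lemma bounds (D : ℤ) (s : ℝ × (ℤ×ℤ×ℤ)) (h : SInv D s) :
    1 ≤ D ∧ |s.2.1| ≤ 3*D ∧ |s.2.2.1| ≤ 3*D ∧ |s.2.2.2| ≤ 3*D := by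
  obtain ⟨x, A, B, C⟩ := s
  obtain ⟨hirr, hx0, hx1, hA, hq, hc, hD⟩ := h
  simp only [conjOf] at hc
  dsimp only at hirr hx0 hx1 hA hq hc hD ⊢
  obtain ⟨y, hy⟩ : ∃ y:ℝ, y = -(B:ℝ)/(A:ℝ) - x := ⟨_, rfl⟩
  rw [← hy] at hc
  have hAne : (A:ℝ) ≠ 0 := Int.cast_ne_zero.2 hA
  have hB : (B:ℝ) = -(A:ℝ)*(x+y) := by rw [hy]; field_simp; ring
  have hC : (C:ℝ) = (A:ℝ)*(x*y) := by
    have h' : (C:ℝ) = -((A:ℝ)*x^2 + (B:ℝ)*x) := by linarith [hq]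
    rw [h', hB]; ring
  have hxy : x ≠ y := by
    intro h'
    apply hirr
    refine ⟨(-B : ℚ)/(2*A), ?_⟩
    have : (B:ℝ) = -(A:ℝ)*(2*x) := by rw [hB, h']; ring
    push_cast
    rw [this]
    field_simp
  -- D ≥ 1
  have hDpos : 1 ≤ D := by
    have hr : ((B^2 - 4*A*C : ℤ):ℝ) = ((A:ℝ)*(x-y))^2 := by push_cast; rw [hB, hC]; ring
    have : (0:ℝ) < ((D:ℤ):ℝ) := by
      rw [← hD, hr]
      have : (A:ℝ)*(x-y) ≠ 0 := mul_ne_zero hAne (sub_ne_zero.2 hxy)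
      positivity
    have : (0:ℤ) < D := by exact_mod_cast this
    omega
  -- C(A+B+C) ≤ -1
  have hCS : C*(A+B+C) ≤ -1 := by
    have hr : ((C*(A+B+C) : ℤ):ℝ) = (A:ℝ)^2*(x*y*((1-x)*(1-y))) := by
      push_cast; rw [hB, hC]; ring
    have hlt : ((C*(A+B+C) : ℤ):ℝ) < 0 := by
      rw [hr]
      rcases hc with h'|h'
      · have h1 : x*y < 0 := mul_neg_of_pos_of_neg hx0 h'
        have h2 : (0:ℝ) < (1-x)*(1-y) := mul_pos (by linarith) (by linarith)
        have h3 : (0:ℝ) < (A:ℝ)^2 := by positivity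
        exact mul_neg_of_pos_of_neg h3 (mul_neg_of_neg_of_pos h1 h2)
      · have h1 : (0:ℝ) < x*y := mul_pos hx0 (by linarith)
        have h2 : (1-x)*(1-y) < 0 := mul_neg_of_pos_of_neg (by linarith) (by linarith)
        have h3 : (0:ℝ) < (A:ℝ)^2 := by positivity
        exact mul_neg_of_pos_of_neg h3 (mul_neg_of_pos_of_neg h1 h2)
    have : C*(A+B+C) < 0 := by exact_mod_cast hlt
    omega
  have hB2C : (B+2*C)^2 ≤ D := by nlinarith [hD, hCS]
  have habsB2C : |B+2*C| ≤ D := sq_le_abs_le _ _ hDpos hB2C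
  have hCz : C ≠ 0 := by intro h'; rw [h'] at hCS; omega
  have hSz : A+B+C ≠ 0 := by intro h'; rw [h'] at hCS; omega
  rcases hc with h'|h'
  · -- y < 0 : AC < 0
    have hAC : A*C ≤ -1 := by
      have hr : ((A*C : ℤ):ℝ) = (A:ℝ)^2*(x*y) := by push_cast; rw [hC]; ring
      have hlt : ((A*C : ℤ):ℝ) < 0 := by
        rw [hr]
        have h1 : x*y < 0 := mul_neg_of_pos_of_neg hx0 h'
        have h3 : (0:ℝ) < (A:ℝ)^2 := by positivity
        exact mul_neg_of_pos_of_neg h3 h1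
      have : A*C < 0 := by exact_mod_cast hlt
      omega
    have hBB : B^2 ≤ D := by nlinarith [hD, hAC]
    have habsB : |B| ≤ D := sq_le_abs_le _ _ hDpos hBB
    have habsC : |C| ≤ D := by
      have h1 := abs_le.1 habsB
      have h2 := abs_le.1 habsB2C
      rw [abs_le]; omega
    have habsA : |A| ≤ D := by
      have h4 : -(4*(A*C)) ≤ D := by nlinarith [sq_nonneg B]
      have h5 : |A| ≤ |A*C| := by
        rw [abs_mul]
        exact le_mul_of_one_le_right (abs_nonneg _) (Int.one_le_abs hCz)
      have h6 : |A*C| = -(A*C) := abs_of_neg (by omega)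
      omega
    have h1 := abs_le.1 habsA
    have h2 := abs_le.1 habsB
    have h3 := abs_le.1 habsC
    refine ⟨hDpos, by rw [abs_le]; omega, by rw [abs_le]; omega, by rw [abs_le]; omega⟩
  · -- y > 1 : A(A+B+C) < 0
    have hAS : A*(A+B+C) ≤ -1 := by
      have hr : ((A*(A+B+C) : ℤ):ℝ) = (A:ℝ)^2*((1-x)*(1-y)) := by
        push_cast; rw [hB, hC]; ring
      have hlt : ((A*(A+B+C) : ℤ):ℝ) < 0 := by
        rw [hr]
        have h2 : (1-x)*(1-y) < 0 := mul_neg_of_pos_of_neg (by linarith) (by linarith)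
        have h3 : (0:ℝ) < (A:ℝ)^2 := by positivity
        exact mul_neg_of_pos_of_neg h3 h2
      have : A*(A+B+C) < 0 := by exact_mod_cast hlt
      omega
    have h2AB : (2*A+B)^2 ≤ D := by nlinarith [hD, hAS]
    have habs2AB : |2*A+B| ≤ D := sq_le_abs_le _ _ hDpos h2AB
    have habsA : |A| ≤ D := by
      have h4 : -(4*(A*(A+B+C))) ≤ D := by nlinarith [sq_nonneg (2*A+B)]
      have h5 : |A| ≤ |A*(A+B+C)| := by
        rw [abs_mul]
        exact le_mul_of_one_le_right (abs_nonneg _) (Int.one_le_abs hSz)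
      have h6 : |A*(A+B+C)| = -(A*(A+B+C)) := abs_of_neg (by omega)
      omega
    have habsC : |C| ≤ D := by
      have h4 : -(4*(C*(A+B+C))) ≤ D := by nlinarith [sq_nonneg (B+2*C)]
      have h5 : |C| ≤ |C*(A+B+C)| := by
        rw [abs_mul]
        exact le_mul_of_one_le_right (abs_nonneg _) (Int.one_le_abs hSz)
      have h6 : |C*(A+B+C)| = -(C*(A+B+C)) := abs_of_neg (by omega)
      omega
    have habsB : |B| ≤ 3*D := by
      have h1 := abs_le.1 habs2AB
      have h2 := abs_le.1 habsA
      rw [abs_le]; omega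
    have h1 := abs_le.1 habsA
    have h3 := abs_le.1 habsC
    refine ⟨hDpos, by rw [abs_le]; omega, habsB, by rw [abs_le]; omega⟩

lemma triple_unique (D : ℤ) (s s' : ℝ × (ℤ×ℤ×ℤ))
    (h1 : SInv D s) (h2 : SInv D s') (ht : s.2 = s'.2) : s.1 = s'.1 := by
  obtain ⟨x, t⟩ := s
  obtain ⟨z, t'⟩ := s'
  dsimp only at ht
  subst ht
  obtain ⟨A, B, C⟩ := t
  obtain ⟨hirr, hx0, hx1, hA, hq, hc, hD⟩ := h1
  obtain ⟨hirr', hz0, hz1, -, hq', -, -⟩ := h2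
  simp only [conjOf] at hc
  dsimp only at *
  have hAne : (A:ℝ) ≠ 0 := Int.cast_ne_zero.2 hA
  have hfac : ((A:ℝ)*(x+z)+B)*(x-z) = 0 := by linear_combination hq - hq'
  rcases mul_eq_zero.1 hfac with h'|h'
  · have hzval : z = -(B:ℝ)/A - x := by field_simp; linarith
    rcases hc with hcc|hcc <;> rw [← hzval] at hcc <;> linarith
  · linarith [sub_eq_zero.1 h']

lemma step_inj (D : ℤ) (s s' : ℝ × (ℤ×ℤ×ℤ)) (hs : SInv D s) (hs' : SInv D s')
    (h : stepF s = stepF s') : s = s' := by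
  have hc := (inv_step D s hs).2
  have hc' := (inv_step D s' hs').2
  by_cases hb : s.1 < 1/2 <;> by_cases hb' : s'.1 < 1/2
  · have e1 : stepF s = (s.1/(1-s.1), tq0 s.2) := by simp only [stepF, if_pos hb]
    have e2 : stepF s' = (s'.1/(1-s'.1), tq0 s'.2) := by simp only [stepF, if_pos hb']
    rw [e1, e2, Prod.mk.injEq] at h
    have hne : (1:ℝ) - s.1 ≠ 0 := by intro h'; linarith [hs.2.2.1]
    have hne' : (1:ℝ) - s'.1 ≠ 0 := by intro h'; linarith [hs'.2.2.1]
    have hx : s.1 = s'.1 := by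
      have h1 := h.1
      field_simp at h1
      linear_combination h1
    have ht : s.2 = s'.2 := by
      have h2 := h.2
      simp only [tq0, Prod.mk.injEq] at h2
      obtain ⟨u1, u2, u3⟩ := h2
      exact Prod.ext (by omega) (Prod.ext (by omega) (by omega))
    exact Prod.ext hx ht
  · rw [if_pos hb] at hc; rw [if_neg hb'] at hc'; rw [h] at hc; linarith
  · rw [if_neg hb] at hc; rw [if_pos hb'] at hc'; rw [h] at hc; linarith
  · have e1 : stepF s = (2-1/s.1, tq1 s.2) := by simp only [stepF, if_neg hb]
    have e2 : stepF s' = (2-1/s'.1, tq1 s'.2) := by simp only [stepF, if_neg hb']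
    rw [e1, e2, Prod.mk.injEq] at h
    have hx0 : s.1 ≠ 0 := ne_of_gt hs.2.1
    have hx0' : s'.1 ≠ 0 := ne_of_gt hs'.2.1
    have hx : s.1 = s'.1 := by
      have h1 : 1/s.1 = 1/s'.1 := by linarith [h.1]
      field_simp at h1
      linarith
    have ht : s.2 = s'.2 := by
      have h2 := h.2
      simp only [tq1, Prod.mk.injEq] at h2
      obtain ⟨u1, u2, u3⟩ := h2
      exact Prod.ext (by omega) (Prod.ext (by omega) (by omega))
    exact Prod.ext hx ht

lemma orbit_periodic (D : ℤ) (s0 : ℝ × (ℤ×ℤ×ℤ)) (h0 : SInv D s0) :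
    ∃ p : ℕ, 1 ≤ p ∧ stepF^[p] s0 = s0 := by
  have hInv : ∀ j, SInv D (stepF^[j] s0) := by
    intro j
    induction j with
    | zero => exact h0
    | succ j ih => rw [Function.iterate_succ_apply']; exact (inv_step D _ ih).1
  have key : ∀ j k : ℕ, j < k → (stepF^[j] s0).2 = (stepF^[k] s0).2 →
      ∃ p : ℕ, 1 ≤ p ∧ stepF^[p] s0 = s0 := by
    intro j k hlt he'
    have hxeq : (stepF^[j] s0).1 = (stepF^[k] s0).1 :=
      triple_unique D _ _ (hInv j) (hInv k) he'
    have hseq : stepF^[j] s0 = stepF^[k] s0 := Prod.ext hxeq he'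
    have hback : ∀ d, d ≤ j → stepF^[(j-d) + (k-j)] s0 = stepF^[j-d] s0 := by
      intro d
      induction d with
      | zero =>
        intro _
        simpa [Nat.sub_zero, Nat.add_sub_cancel' hlt.le] using hseq.symm
      | succ d ih =>
        intro hd
        have hd' : d ≤ j := by omega
        have h1 := ih hd'
        rw [show j - d = (j - (d+1)) + 1 by omega] at h1
        rw [show j - (d+1) + 1 + (k-j) = (j - (d+1) + (k-j)) + 1 by omega] at h1
        rw [Function.iterate_succ_apply', Function.iterate_succ_apply'] at h1
        exact step_inj D _ _ (hInv _) (hInv _) h1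
    have hfin := hback j le_rfl
    simp only [Nat.sub_self, Nat.zero_add] at hfin
    exact ⟨k - j, by omega, hfin⟩
  set S : Finset (ℤ×ℤ×ℤ) := Finset.Icc (-(3*D),-(3*D),-(3*D)) (3*D,3*D,3*D) with hS
  have hmem : ∀ j : ℕ, (stepF^[j] s0).2 ∈ S := by
    intro j
    obtain ⟨-, h1, h2, h3⟩ := bounds D _ (hInv j)
    have e1 := abs_le.1 h1
    have e2 := abs_le.1 h2
    have e3 := abs_le.1 h3
    rw [hS, Finset.mem_Icc]
    refine ⟨⟨e1.1, e2.1, e3.1⟩, ⟨e1.2, e2.2, e3.2⟩⟩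
  obtain ⟨j, k, hjk, he⟩ := Finite.exists_ne_map_eq_of_infinite
    (fun j : ℕ => (⟨(stepF^[j] s0).2, hmem j⟩ : {t // t ∈ S}))
  have he' : (stepF^[j] s0).2 = (stepF^[k] s0).2 := congrArg Subtype.val he
  rcases hjk.lt_or_gt with hlt | hlt
  · exact key j k hlt he'
  · exact key k j hlt he'.symm

lemma mob_step (D : ℤ) (s : ℝ × (ℤ×ℤ×ℤ)) (h : SInv D s) :
    mob (!decide (s.1 < 1/2)) (stepF s).1 = s.1 := by
  by_cases hb : s.1 < 1/2
  · have e1 : (stepF s).1 = s.1/(1-s.1) := by simp only [stepF, if_pos hb]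
    have hne : (1:ℝ) - s.1 ≠ 0 := by intro h'; linarith [h.2.2.1]
    rw [e1]
    have hbit : (!decide (s.1 < 1/2)) = false := by rw [decide_eq_true hb]; rfl
    rw [hbit]
    show (s.1/(1-s.1))/(1 + s.1/(1-s.1)) = s.1
    have h2 : 1 + s.1/(1-s.1) = 1/(1-s.1) := by field_simp; ring
    have h3 : 1 + s.1/(1-s.1) ≠ 0 := by rw [h2]; exact one_div_ne_zero hne
    rw [div_eq_iff h3, h2, mul_one_div]
  · have e1 : (stepF s).1 = 2-1/s.1 := by simp only [stepF, if_neg hb]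
    have hne : s.1 ≠ 0 := ne_of_gt h.2.1
    rw [e1]
    have hbit : (!decide (s.1 < 1/2)) = true := by rw [decide_eq_false hb]; rfl
    rw [hbit]
    show 1/(2-(2-1/s.1)) = s.1
    rw [show (2:ℝ)-(2-1/s.1) = 1/s.1 by ring, one_div_one_div]

lemma mobAll_orbit (D : ℤ) (s0 : ℝ × (ℤ×ℤ×ℤ)) (hInv : ∀ j, SInv D (stepF^[j] s0)) :
    ∀ m i : ℕ,
      mobAll ((List.range m).map (fun d => !decide ((stepF^[i+d] s0).1 < 1/2)))
        ((stepF^[i+m] s0).1) = (stepF^[i] s0).1 := by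
  intro m
  induction m with
  | zero => intro i; simp [mobAll]
  | succ m ih =>
    intro i
    rw [List.range_succ, List.map_append]
    show mobAll (_ ++ [_]) _ = _
    rw [show ∀ (l1 l2 : List Bool) (β : ℝ), mobAll (l1 ++ l2) β = mobAll l1 (mobAll l2 β)
        from fun l1 l2 β => List.foldr_append]
    have e0 : mobAll [!decide ((stepF^[i+m] s0).1 < 1/2)] ((stepF^[i+(m+1)] s0).1)
        = (stepF^[i+m] s0).1 := by
      show mob _ _ = _
      rw [show i+(m+1) = (i+m)+1 by omega, Function.iterate_succ_apply']
      exact mob_step D _ (hInv (i+m))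
    rw [e0, ih i]

/-- For every Sturm number `α` — an irrational quadratic in
`(0,1)` with `α² = bα + c` (`b, c ∈ ℚ`) whose conjugate `ᾱ = b - α` lies outside
`[0,1]` — there is a non-identity morphism `ψ ∈ ⟨ψ₃, ψ₈⟩` fixing `s_{α,0}`. -/
theorem sturm_number_fixes_s_alpha_zero (α : ℝ) (hirr : Irrational α)
    (h0 : 0 < α) (h1 : α < 1)
    (b c : ℚ) (hquad : α ^ 2 = (b : ℝ) * α + (c : ℝ))
    (hconj : (b : ℝ) - α < 0 ∨ 1 < (b : ℝ) - α) :
    ∃ ψ : Morph, (∃ l : List Bool, ψ = compAll g38 l) ∧ ψ ≠ idm ∧ Fixes ψ (sw α 0) := by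
  classical
  obtain ⟨A, hA⟩ : ∃ A : ℤ, A = (b.den : ℤ) * (c.den : ℤ) := ⟨_, rfl⟩
  obtain ⟨B, hB⟩ : ∃ B : ℤ, B = -((b.num) * (c.den : ℤ)) := ⟨_, rfl⟩
  obtain ⟨C, hC⟩ : ∃ C : ℤ, C = -((c.num) * (b.den : ℤ)) := ⟨_, rfl⟩
  have hbden : ((b.den:ℕ):ℝ) ≠ 0 := Nat.cast_ne_zero.2 b.den_nz
  have hcden : ((c.den:ℕ):ℝ) ≠ 0 := Nat.cast_ne_zero.2 c.den_nz
  have hbv : (b:ℝ) * ((b.den:ℕ):ℝ) = ((b.num:ℤ):ℝ) := by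
    rw [Rat.cast_def]; field_simp
  have hcv : (c:ℝ) * ((c.den:ℕ):ℝ) = ((c.num:ℤ):ℝ) := by
    rw [Rat.cast_def]; field_simp
  have hAne : A ≠ 0 := by
    rw [hA]
    exact mul_ne_zero (Int.natCast_ne_zero.2 b.den_nz) (Int.natCast_ne_zero.2 c.den_nz)
  have hqz : (A:ℝ)*α^2 + (B:ℝ)*α + (C:ℝ) = 0 := by
    rw [hA, hB, hC]
    push_cast
    linear_combination (((b.den:ℕ):ℝ) * ((c.den:ℕ):ℝ)) * hquad
      + (((c.den:ℕ):ℝ)) * α * hbv + (((b.den:ℕ):ℝ)) * hcv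
  have hconjv : conjOf (α, (A, B, C)) = (b:ℝ) - α := by
    show -(B:ℝ)/(A:ℝ) - α = (b:ℝ) - α
    have hv : -(B:ℝ)/(A:ℝ) = (b:ℝ) := by
      rw [hA, hB]
      push_cast
      rw [div_eq_iff (mul_ne_zero hbden hcden)]
      linear_combination (-((c.den:ℕ):ℝ)) * hbv
    rw [hv]
  obtain ⟨D, hD⟩ : ∃ D : ℤ, D = B^2 - 4*A*C := ⟨_, rfl⟩
  have hInv0 : SInv D (α, (A, B, C)) := by
    refine ⟨hirr, h0, h1, hAne, hqz, ?_, hD.symm⟩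
    rw [hconjv]; exact hconj
  set s0 : ℝ × (ℤ×ℤ×ℤ) := (α, (A, B, C)) with hs0
  have hInv : ∀ j, SInv D (stepF^[j] s0) := by
    intro j
    induction j with
    | zero => exact hInv0
    | succ j ih => rw [Function.iterate_succ_apply']; exact (inv_step D _ ih).1
  obtain ⟨p, hp1, hper⟩ := orbit_periodic D s0 hInv0
  set l : List Bool := (List.range p).map (fun d => !decide ((stepF^[0+d] s0).1 < 1/2)) with hl
  have hml : mobAll l α = α := by
    have := mobAll_orbit D s0 hInv p 0
    rw [Nat.zero_add, hper] at this
    exact this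
  have hlne : l ≠ [] := by
    rw [hl]
    intro h'
    have := congrArg List.length h'
    simp at this
    omega
  refine ⟨compAll g38 l, ⟨l, rfl⟩, ?_, ?_⟩
  · obtain ⟨i, t, hit⟩ := List.exists_cons_of_ne_nil hlne
    rw [hit]
    exact compAll_cons_ne_idm i t
  · intro n
    have := flat_l l α h0 h1 n
    rw [hml] at this
    exact this
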